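/- For every polynomial f ∈ k[x,y] there exist scalars b_{ij} ∈ k (0 ≤ i < m, 0 ≤ j < n), depending only on f, λ, μ, F, G and not on A, such that A^f = Σ_{i,j} b_{ij} F^i A G^j for every A ∈ k^{m×n}, where b_{00} = f(λ,μ) and b_{01} = (∂f/∂y)(λ,μ) (the formal partial derivative of f with respect to y evaluated at (λ,μ)). -/

import Mathlib

open Matrix MvPolynomial

theorem nilpotent_pow_dim_eq_zero {k : Type*} [Field k] {m : ℕ}
    (F : Matrix (Fin m) (Fin m) k) (hFn : IsNilpotent F) : F ^ m = 0 := by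
  have h := Matrix.isNilpotent_charpoly_sub_pow_of_isNilpotent hFn
  have h2 : F.charpoly = Polynomial.X ^ (Fintype.card (Fin m)) := by
    have := h.eq_zero
    rwa [sub_eq_zero] at this
  have h3 := F.aeval_self_charpoly
  rw [h2] at h3
  simpa using h3

theorem pow_smul_one_add {k : Type*} [Field k] {m : ℕ} (lam : k) (F : Matrix (Fin m) (Fin m) k)
    (hF : F ^ m = 0) (p : ℕ) :
    (lam • 1 + F) ^ p = ∑ i ∈ Finset.range m, ((p.choose i : k) * lam ^ (p - i)) • F ^ i := by
  have hc : Commute F (lam • 1) := (Commute.one_right F).smul_right lam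
  rw [add_comm, hc.add_pow]
  have key : ∀ i, F ^ i * (lam • 1) ^ (p - i) * (p.choose i : Matrix (Fin m) (Fin m) k)
      = ((p.choose i : k) * lam ^ (p - i)) • F ^ i := by
    intro i
    have hcast : (p.choose i : Matrix (Fin m) (Fin m) k)
        = ((p.choose i : k)) • (1 : Matrix (Fin m) (Fin m) k) := by
      rw [Nat.cast_smul_eq_nsmul, nsmul_eq_mul, mul_one]
    rw [smul_pow, one_pow, hcast]
    simp [smul_smul, mul_smul_comm, mul_comm]
  simp_rw [key]
  rw [Finset.sum_subset (Finset.range_subset_range.mpr (le_max_left (p+1) m))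
      (fun i _ hi => by
        have : p < i := by simpa using hi
        simp [Nat.choose_eq_zero_of_lt this]),
    Finset.sum_subset (Finset.range_subset_range.mpr (le_max_right (p+1) m))
      (fun i _ hi => by
        have hmi : m ≤ i := by simpa using hi
        have : F ^ i = 0 := by
          rw [← Nat.sub_add_cancel hmi, pow_add, hF, mul_zero]
        simp [this])]

theorem eval_pderiv_aux {k : Type*} [CommRing k] (lam mu : k) (f : MvPolynomial (Fin 2) k) :
    ∑ d ∈ f.support, coeff d f * (lam ^ (d 0) * ((d 1 : k) * mu ^ (d 1 - 1)))
      = MvPolynomial.eval ![lam, mu] (MvPolynomial.pderiv (1 : Fin 2) f) := by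
  rw [← MvPolynomial.sum_def (b := fun d c => c * (lam ^ (d 0) * ((d 1 : k) * mu ^ (d 1 - 1))))]
  induction f using MvPolynomial.induction_on' with
  | monomial u a =>
    rw [MvPolynomial.sum_monomial_eq (by simp), pderiv_monomial, eval_monomial]
    rw [Finsupp.prod_fintype _ _ (fun i => pow_zero _), Fin.prod_univ_two]
    simp only [Finsupp.tsub_apply, Finsupp.single_apply]
    norm_num
    ring
  | add p q hp hq =>
    rw [AddMonoidAlgebra.coeff_add, Finsupp.sum_add_index' (h := fun (d : Fin 2 →₀ ℕ) (c : k) => c * (lam ^ (d 0) * ((d 1 : k) * mu ^ (d 1 - 1)))) (fun d => by simp) (fun d b₁ b₂ => add_mul _ _ _),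
      hp, hq, map_add, map_add]

noncomputable def matApply {k : Type*} [Field k] {m n : ℕ}
    (L : Matrix (Fin m) (Fin m) k) (R : Matrix (Fin n) (Fin n) k)
    (A : Matrix (Fin m) (Fin n) k) (f : MvPolynomial (Fin 2) k) :
    Matrix (Fin m) (Fin n) k :=
  ∑ d ∈ f.support, MvPolynomial.coeff d f • (L ^ (d 0) * A * R ^ (d 1))

/-- For `L = λI + F`, `R = μI + G` with `F`, `G` nilpotent upper triangular, there
are scalars `b_{ij}` (depending only on `f, λ, μ, F, G`) with
`A^f = ∑_{i<m, j<n} b_{ij} F^i A G^j` for every `A`, where `b_00 = f(λ,μ)` and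
`b_01 = (∂f/∂y)(λ,μ)`. -/
theorem matApply_expansion {k : Type*} [Field k] [IsAlgClosed k] {m n : ℕ}
    (hm : 0 < m) (hn : 0 < n) (lam mu : k)
    (F : Matrix (Fin m) (Fin m) k) (G : Matrix (Fin n) (Fin n) k)
    (hFt : F.BlockTriangular (id : Fin m → Fin m)) (hFn : IsNilpotent F)
    (hGt : G.BlockTriangular (id : Fin n → Fin n)) (hGn : IsNilpotent G)
    (f : MvPolynomial (Fin 2) k) :
    ∃ b : ℕ → ℕ → k,
      (∀ A : Matrix (Fin m) (Fin n) k,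
        matApply (lam • 1 + F) (mu • 1 + G) A f =
          ∑ i ∈ Finset.range m, ∑ j ∈ Finset.range n, b i j • (F ^ i * A * G ^ j)) ∧
      b 0 0 = MvPolynomial.eval ![lam, mu] f ∧
      b 0 1 = MvPolynomial.eval ![lam, mu] (MvPolynomial.pderiv (1 : Fin 2) f) := by
  have hFm : F ^ m = 0 := nilpotent_pow_dim_eq_zero F hFn
  have hGm : G ^ n = 0 := nilpotent_pow_dim_eq_zero G hGn
  refine ⟨fun i j => ∑ d ∈ f.support, coeff d f *
      ((((d 0).choose i : k) * lam ^ (d 0 - i)) * (((d 1).choose j : k) * mu ^ (d 1 - j))),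
    ?_, ?_, ?_⟩
  · intro A
    unfold matApply
    simp only [pow_smul_one_add lam F hFm, pow_smul_one_add mu G hGm]
    simp only [Matrix.sum_mul, Matrix.mul_sum, Matrix.smul_mul, Matrix.mul_smul, smul_smul,
      Finset.smul_sum, Finset.sum_smul]
    rw [Finset.sum_comm (s := f.support) (t := Finset.range n)]
    refine Eq.trans (Finset.sum_congr rfl fun j _ => Finset.sum_comm) ?_
    rw [Finset.sum_comm (s := Finset.range n) (t := Finset.range m)]
    refine Finset.sum_congr rfl fun i _ => Finset.sum_congr rfl fun j _ =>
      Finset.sum_congr rfl fun d _ => ?_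
    congr 1
    ring
  · simp only [Nat.choose_zero_right, Nat.cast_one, one_mul, Nat.sub_zero]
    rw [eval_eq']
    refine Finset.sum_congr rfl fun d _ => ?_
    rw [Fin.prod_univ_two]
    simp [mul_assoc]
  · rw [← eval_pderiv_aux lam mu f]
    refine Finset.sum_congr rfl fun d _ => ?_
    simp [mul_assoc]
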